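/- For every ω ∈ ℝ \ {0}, the terms 𝓘(2^{−j−1} ω) equal 1 for all sufficiently large j, so the infinite product ∏_{j=1}^{∞} 𝓘(2^{−j−1} ω) is well defined, and one has 1 − 𝓘(ω/2 + π) · ∏_{j=1}^{∞} 𝓘(2^{−j−1} ω) = 2·𝟙_{(0,∞)}(ω), i.e. the left-hand side equals 2 if ω > 0 and equals 0 if ω < 0. -/
import Mathlib

open scoped Classical

noncomputable def Ifun (ω : ℝ) : ℝ :=
  if ∃ k : ℤ, -Real.pi + 4 * Real.pi * k ≤ ω ∧ ω < Real.pi + 4 * Real.pi * k then 1 else -1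

open Real

lemma bound_iff (x : ℝ) (p q : ℤ) :
    (2 * π * p ≤ x ∧ x < 2 * π * q) ↔ (p ≤ ⌊x / (2 * π)⌋ ∧ ⌊x / (2 * π)⌋ < q) := by
  rw [Int.le_floor, Int.floor_lt, le_div_iff₀ Real.two_pi_pos, div_lt_iff₀ Real.two_pi_pos]
  constructor <;> rintro ⟨h1, h2⟩ <;> constructor <;> linarith

lemma charA (x : ℝ) :
    (∃ k : ℤ, -π + 4 * π * k ≤ x + π ∧ x + π < π + 4 * π * k) ↔
      ∃ k : ℤ, ⌊x / (2 * π)⌋ = 2 * k - 1 := by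
  constructor
  · rintro ⟨k, h1, h2⟩
    refine ⟨k, ?_⟩
    have := (bound_iff x (2*k-1) (2*k)).mp ⟨by push_cast; linarith, by push_cast; linarith⟩
    omega
  · rintro ⟨k, hk⟩
    have := (bound_iff x (2*k-1) (2*k)).mpr ⟨by omega, by omega⟩
    exact ⟨k, by push_cast at this ⊢; constructor <;> linarith [this.1, this.2]⟩

lemma charB (x : ℝ) :
    (∃ k : ℤ, -π + 4 * π * k ≤ x / 2 ∧ x / 2 < π + 4 * π * k) ↔
      ∃ k : ℤ, ⌊x / (2 * π)⌋ = 4 * k - 1 ∨ ⌊x / (2 * π)⌋ = 4 * k := by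
  constructor
  · rintro ⟨k, h1, h2⟩
    refine ⟨k, ?_⟩
    have := (bound_iff x (4*k-1) (4*k+1)).mp ⟨by push_cast; linarith, by push_cast; linarith⟩
    omega
  · rintro ⟨k, hk⟩
    have := (bound_iff x (4*k-1) (4*k+1)).mpr ⟨by omega, by omega⟩
    exact ⟨k, by push_cast at this ⊢; constructor <;> linarith [this.1, this.2]⟩

lemma charC (x : ℝ) :
    (∃ k : ℤ, -π + 4 * π * k ≤ x / 2 + π ∧ x / 2 + π < π + 4 * π * k) ↔
      ∃ k : ℤ, ⌊x / (2 * π)⌋ = 4 * k - 2 ∨ ⌊x / (2 * π)⌋ = 4 * k - 1 := by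
  constructor
  · rintro ⟨k, h1, h2⟩
    refine ⟨k, ?_⟩
    have := (bound_iff x (4*k-2) (4*k)).mp ⟨by push_cast; linarith, by push_cast; linarith⟩
    omega
  · rintro ⟨k, hk⟩
    have := (bound_iff x (4*k-2) (4*k)).mpr ⟨by omega, by omega⟩
    exact ⟨k, by push_cast at this ⊢; constructor <;> linarith [this.1, this.2]⟩

lemma key (x : ℝ) : Ifun (x + π) * Ifun (x / 2) = Ifun (x / 2 + π) := by
  unfold Ifun
  by_cases hA : ∃ k : ℤ, -π + 4 * π * k ≤ x + π ∧ x + π < π + 4 * π * k <;>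
  by_cases hB : ∃ k : ℤ, -π + 4 * π * k ≤ x / 2 ∧ x / 2 < π + 4 * π * k
  · -- A true, B true: C true
    have hC : ∃ k : ℤ, -π + 4 * π * k ≤ x / 2 + π ∧ x / 2 + π < π + 4 * π * k := by
      rw [charC]
      obtain ⟨a, ha⟩ := (charA x).mp hA
      obtain ⟨b, hb⟩ := (charB x).mp hB
      exact ⟨b, by omega⟩
    simp only [if_pos hA, if_pos hB, if_pos hC]; ring
  · have hC : ¬ ∃ k : ℤ, -π + 4 * π * k ≤ x / 2 + π ∧ x / 2 + π < π + 4 * π * k := by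
      rw [charC]
      obtain ⟨a, ha⟩ := (charA x).mp hA
      rw [charB] at hB; push_neg at hB
      rintro ⟨k, hk⟩
      exact absurd hk (by have := hB k; omega)
    simp only [if_pos hA, if_neg hB, if_neg hC]; ring
  · have hC : ¬ ∃ k : ℤ, -π + 4 * π * k ≤ x / 2 + π ∧ x / 2 + π < π + 4 * π * k := by
      rw [charC]
      rw [charA] at hA; push_neg at hA
      obtain ⟨b, hb⟩ := (charB x).mp hB
      rintro ⟨k, hk⟩
      rcases hk with h | h
      · have h1 := hA ((⌊x / (2*π)⌋ + 1)/2); omega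
      · have h1 := hA ((⌊x / (2*π)⌋ + 1)/2); omega
    simp only [if_neg hA, if_pos hB, if_neg hC]; ring
  · have hC : ∃ k : ℤ, -π + 4 * π * k ≤ x / 2 + π ∧ x / 2 + π < π + 4 * π * k := by
      rw [charC]
      rw [charA] at hA; push_neg at hA
      rw [charB] at hB; push_neg at hB
      set n := ⌊x / (2*π)⌋ with hn
      have hodd := hA ((n + 1)/2)
      have h4 := hB ((n+1)/4)
      have h4' := hB (n/4)
      refine ⟨(n+2)/4, by omega⟩
    simp only [if_neg hA, if_neg hB, if_pos hC]; ring

lemma tele (ω : ℝ) (N : ℕ) :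
    Ifun (ω / 2 + π) * ∏ j ∈ Finset.range N, Ifun (ω / 2 ^ (j + 2)) =
      Ifun (ω / 2 ^ (N + 1) + π) := by
  induction N with
  | zero => simp
  | succ N ih =>
    rw [Finset.prod_range_succ, ← mul_assoc, ih]
    have h2 : ω / 2 ^ (N + 2) = (ω / 2 ^ (N + 1)) / 2 := by
      rw [div_div, ← pow_succ]
    rw [h2, key]

/-- the telescoping rectangular-function identity
`1 - 𝓘(ω/2 + π) ∏_{j≥1} 𝓘(2^{-j-1} ω) = 2·𝟙_{(0,∞)}(ω)` for `ω ≠ 0`.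
(Here the product over `j ≥ 1` is indexed by `j : ℕ` via `j ↦ j + 1`.) -/
theorem rect_product_identity (ω : ℝ) (hω : ω ≠ 0) :
    (∃ J : ℕ, ∀ j : ℕ, J ≤ j → Ifun (ω / 2 ^ (j + 2)) = 1) ∧
    Multipliable (fun j : ℕ => Ifun (ω / 2 ^ (j + 2))) ∧
    1 - Ifun (ω / 2 + Real.pi) * ∏' j : ℕ, Ifun (ω / 2 ^ (j + 2)) =
      2 * (if 0 < ω then 1 else 0) := by
  obtain ⟨J, hJ⟩ := pow_unbounded_of_one_lt (|ω| / π) (by norm_num : (1:ℝ) < 2)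
  have hJ' : |ω| < π * 2 ^ J := by
    rw [div_lt_iff₀ Real.pi_pos] at hJ; linarith
  have habs : ∀ j : ℕ, J ≤ j → |ω / 2 ^ (j + 2)| < π := by
    intro j hj
    rw [abs_div, abs_of_pos (by positivity : (0:ℝ) < 2 ^ (j+2)),
      div_lt_iff₀ (by positivity : (0:ℝ) < 2 ^ (j+2))]
    calc |ω| < π * 2 ^ J := hJ'
    _ ≤ π * 2 ^ (j+2) := by
        have h2 : (2:ℝ) ^ J ≤ 2 ^ (j+2) := pow_le_pow_right₀ (by norm_num) (by omega)
        nlinarith [Real.pi_pos]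
  have hone : ∀ j : ℕ, J ≤ j → Ifun (ω / 2 ^ (j + 2)) = 1 := by
    intro j hj
    have h := abs_lt.mp (habs j hj)
    exact if_pos ⟨0, by push_cast; constructor <;> linarith [h.1, h.2]⟩
  refine ⟨⟨J, hone⟩, ?_, ?_⟩
  · exact multipliable_of_ne_finset_one (s := Finset.range J)
      (fun j hj => hone j (by simpa using hj))
  · rw [tprod_eq_prod (s := Finset.range J) (fun j hj => hone j (by simpa using hj)), tele]
    have hval : Ifun (ω / 2 ^ (J + 1) + π) = if 0 < ω then -1 else 1 := by
      have hb : |ω / 2 ^ (J + 1)| < π := by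
        rw [abs_div, abs_of_pos (by positivity : (0:ℝ) < 2 ^ (J+1)),
          div_lt_iff₀ (by positivity : (0:ℝ) < 2 ^ (J+1))]
        calc |ω| < π * 2 ^ J := hJ'
        _ ≤ π * 2 ^ (J+1) := by
            have h2 : (2:ℝ) ^ J ≤ 2 ^ (J+1) := pow_le_pow_right₀ (by norm_num) (by omega)
            nlinarith [Real.pi_pos]
      have hb' := abs_lt.mp hb
      by_cases hpos : 0 < ω
      · rw [if_pos hpos]
        have hy : 0 < ω / 2 ^ (J + 1) := by positivity
        refine if_neg ?_
        rintro ⟨k, h1, h2⟩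
        have hk1 : (1:ℝ) ≤ k := by
          have : (0:ℤ) < k := by
            have : (0:ℝ) < k := by nlinarith [Real.pi_pos, hb'.2]
            exact_mod_cast this
          exact_mod_cast this
        nlinarith [Real.pi_pos, hb'.2]
      · rw [if_neg hpos]
        have hneg : ω < 0 := lt_of_le_of_ne (not_lt.mp hpos) hω
        have hy : ω / 2 ^ (J + 1) < 0 := by
          apply div_neg_of_neg_of_pos hneg; positivity
        exact if_pos ⟨0, by push_cast; constructor <;> linarith [hb'.1]⟩
    rw [hval]
    by_cases hpos : 0 < ω <;> simp [hpos] <;> norm_num
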